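/- Let f : ℝ^n → ℝ be convex, differentiable with L_f-Lipschitz continuous gradient and strongly convex with some parameter σ_f > 0, and let H_y be a real p×n matrix such that the smallest eigenvalue λ_min of H_y H_yᵀ is strictly positive (equivalently, H_yᵀ is injective). Then F : ℝ^p → ℝ defined by F(μ) = f⋆(H_yᵀ μ) is strongly convex with parameter λ_min / L_f. (Strong-convexity part of Lemma 3.) -/

import Mathlib

open scoped RealInnerProductSpace
open Matrix

/-- The Fenchel conjugate as a real-valued function (valid whenever the supremum is
finite, which holds for continuous strongly convex `f`). -/
noncomputable def realConj {q : ℕ} (f : EuclideanSpace ℝ (Fin q) → ℝ)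
    (y : EuclideanSpace ℝ (Fin q)) : ℝ :=
  ⨆ x, (⟪y, x⟫ - f x)

/-- `h` is strongly convex with parameter `σ`. -/
def StronglyConvexWith {E : Type*} [NormedAddCommGroup E] [NormedSpace ℝ E]
    (σ : ℝ) (h : E → ℝ) : Prop :=
  ∀ x y : E, ∀ l : ℝ, 0 ≤ l → l ≤ 1 →
    h (l • x + (1 - l) • y) ≤ l * h x + (1 - l) * h y - σ / 2 * (l * (1 - l) * ‖x - y‖ ^ 2)

/-- `eigMinMulT H` is the smallest eigenvalue of `H Hᵀ`. -/
noncomputable def eigMinMulT {m n : Type*} [Fintype m] [Fintype n] [DecidableEq m]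
    (H : Matrix m n ℝ) : ℝ :=
  ⨅ i, ((H.conjTranspose_eq_transpose_of_trivial ▸ isHermitian_mul_conjTranspose_self H :
      (H * Hᵀ).IsHermitian)).eigenvalues i


set_option maxHeartbeats 1000000

section Aux
variable {q : ℕ}

lemma line_deriv (f : EuclideanSpace ℝ (Fin q) → ℝ) (g : EuclideanSpace ℝ (Fin q))
    (a d : EuclideanSpace ℝ (Fin q)) (t : ℝ) (h : HasGradientAt f g (a + t • d)) :
    HasDerivAt (fun t : ℝ => f (a + t • d)) ⟪g, d⟫ t := by
  have hc : HasDerivAt (fun t : ℝ => a + t • d) d t := by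
    simpa using ((hasDerivAt_id t).smul_const d).const_add a
  have hf := (hasGradientAt_iff_hasFDerivAt.mp h)
  have := hf.comp_hasDerivAt t hc
  simpa [InnerProductSpace.toDual_apply_apply, Function.comp_def] using this

lemma descent (f : EuclideanSpace ℝ (Fin q) → ℝ)
    (f' : EuclideanSpace ℝ (Fin q) → EuclideanSpace ℝ (Fin q))
    (hdiff : ∀ x, HasGradientAt f (f' x) x)
    (Lf : ℝ) (hLf : 0 < Lf)
    (hlip : ∀ x y, ‖f' x - f' y‖ ≤ Lf * ‖x - y‖)
    (a d : EuclideanSpace ℝ (Fin q)) :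
    f (a + d) ≤ f a + ⟪f' a, d⟫ + Lf / 2 * ‖d‖ ^ 2 := by
  have hf'cont : Continuous f' := by
    have : LipschitzWith (Real.toNNReal Lf) f' :=
      LipschitzWith.of_dist_le_mul fun x y => by
        rw [dist_eq_norm, dist_eq_norm, Real.coe_toNNReal _ hLf.le]; exact hlip x y
    exact this.continuous
  set ψ : ℝ → ℝ := fun t => ⟪f' (a + t • d), d⟫ with hψ
  have hψcont : Continuous ψ := by
    apply Continuous.inner
    · exact hf'cont.comp (by continuity)
    · exact continuous_const
  have hderiv : ∀ t ∈ Set.uIcc (0:ℝ) 1, HasDerivAt (fun t : ℝ => f (a + t • d)) (ψ t) t := by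
    intro t _
    exact line_deriv f (f' (a + t • d)) a d t (hdiff _)
  have hint : f (a + d) - f a = ∫ t in (0:ℝ)..1, ψ t := by
    have := intervalIntegral.integral_eq_sub_of_hasDerivAt hderiv
      (hψcont.intervalIntegrable 0 1)
    simpa using this.symm
  have hbound : ∀ t ∈ Set.Icc (0:ℝ) 1, ψ t ≤ ψ 0 + Lf * ‖d‖ ^ 2 * t := by
    intro t ht
    have h1 : ψ t - ψ 0 = ⟪f' (a + t • d) - f' (a + (0:ℝ) • d), d⟫ := by
      rw [inner_sub_left]
    have h2 : ψ t - ψ 0 ≤ Lf * ‖d‖ ^ 2 * t := by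
      rw [h1]
      calc ⟪f' (a + t • d) - f' (a + (0:ℝ) • d), d⟫
          ≤ ‖f' (a + t • d) - f' (a + (0:ℝ) • d)‖ * ‖d‖ := real_inner_le_norm _ _
        _ ≤ (Lf * ‖(a + t • d) - (a + (0:ℝ) • d)‖) * ‖d‖ := by
            gcongr; exact hlip _ _
        _ = Lf * ‖d‖ ^ 2 * t := by
            simp only [zero_smul, add_zero, add_sub_cancel_left]
            rw [norm_smul, Real.norm_eq_abs, abs_of_nonneg ht.1]
            ring
    linarith
  have hmono : (∫ t in (0:ℝ)..1, ψ t) ≤ ∫ t in (0:ℝ)..1, (ψ 0 + Lf * ‖d‖ ^ 2 * t) := by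
    apply intervalIntegral.integral_mono_on (by norm_num)
      (hψcont.intervalIntegrable 0 1)
    · exact ((continuous_const.add (continuous_const.mul continuous_id)).intervalIntegrable 0 1)
    · exact hbound
  have hval : (∫ t in (0:ℝ)..1, (ψ 0 + Lf * ‖d‖ ^ 2 * t)) = ψ 0 + Lf / 2 * ‖d‖ ^ 2 := by
    rw [intervalIntegral.integral_add (intervalIntegrable_const)
      (((by continuity : Continuous fun t : ℝ => Lf * ‖d‖ ^ 2 * t)).intervalIntegrable 0 1)]
    have h1 : (∫ t in (0:ℝ)..1, Lf * ‖d‖ ^ 2 * t) = Lf * ‖d‖ ^ 2 * ∫ t in (0:ℝ)..1, t :=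
      intervalIntegral.integral_const_mul _ _
    rw [h1, integral_id, intervalIntegral.integral_const]
    simp
    ring
  have hψ0 : ψ 0 = ⟪f' a, d⟫ := by simp [hψ]
  nlinarith [hint, hmono.trans hval.le]

lemma sc_lower (f : EuclideanSpace ℝ (Fin q) → ℝ) (g : EuclideanSpace ℝ (Fin q))
    (hg : HasGradientAt f g 0) (σ : ℝ) (hsc : StronglyConvexWith σ f)
    (x : EuclideanSpace ℝ (Fin q)) :
    f 0 + ⟪g, x⟫ + σ / 2 * ‖x‖ ^ 2 ≤ f x := by
  have hline : HasDerivAt (fun t : ℝ => f (t • x)) ⟪g, x⟫ 0 := by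
    have hc : HasDerivAt (fun t : ℝ => t • x) x 0 := by
      simpa using (hasDerivAt_id (0:ℝ)).smul_const x
    have hg' : HasGradientAt f g ((0:ℝ) • x) := by simpa using hg
    have hf := (hasGradientAt_iff_hasFDerivAt.mp hg')
    have := hf.comp_hasDerivAt 0 hc
    simpa [InnerProductSpace.toDual_apply_apply, Function.comp_def] using this
  -- slope tendsto
  have hslope : Filter.Tendsto (fun l : ℝ => (f (l • x) - f 0) / l)
      (nhdsWithin 0 (Set.Ioi 0)) (nhds ⟪g, x⟫) := by
    have h1 := (hasDerivAt_iff_tendsto_slope.mp hline)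
    have h2 : Filter.Tendsto (slope (fun t : ℝ => f (t • x)) 0)
        (nhdsWithin 0 (Set.Ioi 0)) (nhds ⟪g, x⟫) :=
      h1.mono_left (nhdsWithin_mono 0 (by intro t ht; exact ne_of_gt ht))
    refine h2.congr' ?_
    filter_upwards [self_mem_nhdsWithin] with l hl
    simp [slope_def_field, div_eq_inv_mul]
  have hrhs : Filter.Tendsto (fun l : ℝ => f x - f 0 - σ / 2 * ((1 - l) * ‖x‖ ^ 2))
      (nhdsWithin 0 (Set.Ioi 0)) (nhds (f x - f 0 - σ / 2 * ‖x‖ ^ 2)) := by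
    have : Filter.Tendsto (fun l : ℝ => f x - f 0 - σ / 2 * ((1 - l) * ‖x‖ ^ 2))
        (nhds 0) (nhds (f x - f 0 - σ / 2 * ((1 - (0:ℝ)) * ‖x‖ ^ 2))) := by
      apply Continuous.tendsto; continuity
    simpa using this.mono_left nhdsWithin_le_nhds
  have key : ⟪g, x⟫ ≤ f x - f 0 - σ / 2 * ‖x‖ ^ 2 := by
    refine le_of_tendsto_of_tendsto hslope hrhs ?_
    filter_upwards [Ioc_mem_nhdsGT_of_mem (Set.mem_Ico.mpr ⟨le_refl (0:ℝ), one_pos⟩)] with l hl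
    have hsc' := hsc x 0 l hl.1.le hl.2
    simp only [smul_zero, add_zero, sub_zero] at hsc'
    rw [div_le_iff₀ hl.1]
    nlinarith [hsc']
  linarith

lemma conj_bdd (f : EuclideanSpace ℝ (Fin q) → ℝ) (g : EuclideanSpace ℝ (Fin q))
    (hg : HasGradientAt f g 0) (σ : ℝ) (hσ : 0 < σ) (hsc : StronglyConvexWith σ f)
    (y : EuclideanSpace ℝ (Fin q)) :
    BddAbove (Set.range fun x => ⟪y, x⟫ - f x) := by
  refine ⟨‖y - g‖ ^ 2 / (2 * σ) - f 0, ?_⟩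
  rintro _ ⟨x, rfl⟩
  have h1 := sc_lower f g hg σ hsc x
  have h2 : ⟪y, x⟫ - f x ≤ ⟪y - g, x⟫ - σ / 2 * ‖x‖ ^ 2 - f 0 := by
    rw [inner_sub_left]; linarith
  have h3 : ⟪y - g, x⟫ ≤ ‖y - g‖ * ‖x‖ := real_inner_le_norm _ _
  have h4 : ‖y - g‖ * ‖x‖ ≤ ‖y - g‖ ^ 2 / (2 * σ) + σ / 2 * ‖x‖ ^ 2 := by
    have h5 : 0 ≤ (‖y - g‖ - σ * ‖x‖) ^ 2 / (2 * σ) := div_nonneg (sq_nonneg _) (by linarith)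
    have h6 : ‖y - g‖ ^ 2 / (2 * σ) + σ / 2 * ‖x‖ ^ 2 - ‖y - g‖ * ‖x‖
        = (‖y - g‖ - σ * ‖x‖) ^ 2 / (2 * σ) := by field_simp; ring
    linarith
  linarith

lemma conj_strongly_convex (f : EuclideanSpace ℝ (Fin q) → ℝ)
    (f' : EuclideanSpace ℝ (Fin q) → EuclideanSpace ℝ (Fin q))
    (hdiff : ∀ x, HasGradientAt f (f' x) x)
    (Lf : ℝ) (hLf : 0 < Lf)
    (hlip : ∀ x y, ‖f' x - f' y‖ ≤ Lf * ‖x - y‖)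
    (σ : ℝ) (hσ : 0 < σ) (hsc : StronglyConvexWith σ f)
    (y₁ y₂ : EuclideanSpace ℝ (Fin q)) (l : ℝ) (hl0 : 0 ≤ l) (hl1 : l ≤ 1) :
    realConj f (l • y₁ + (1 - l) • y₂) ≤
      l * realConj f y₁ + (1 - l) * realConj f y₂
        - 1 / (2 * Lf) * (l * (1 - l) * ‖y₁ - y₂‖ ^ 2) := by
  have hbdd : ∀ y, BddAbove (Set.range fun x => ⟪y, x⟫ - f x) := fun y =>
    conj_bdd f (f' 0) (hdiff 0) σ hσ hsc y
  set v : EuclideanSpace ℝ (Fin q) := y₁ - y₂ with hv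
  have hl1' : (0:ℝ) ≤ 1 - l := by linarith
  have key : ∀ x : EuclideanSpace ℝ (Fin q),
      ⟪l • y₁ + (1 - l) • y₂, x⟫ - f x ≤
        l * realConj f y₁ + (1 - l) * realConj f y₂
          - 1 / (2 * Lf) * (l * (1 - l) * ‖y₁ - y₂‖ ^ 2) := by
    intro x
    have H1 : ⟪y₁, x + ((1 - l) / Lf) • v⟫ - f (x + ((1 - l) / Lf) • v) ≤ realConj f y₁ :=
      le_ciSup (hbdd y₁) _
    have H2 : ⟪y₂, x + (-(l / Lf)) • v⟫ - f (x + (-(l / Lf)) • v) ≤ realConj f y₂ :=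
      le_ciSup (hbdd y₂) _
    have H3 := descent f f' hdiff Lf hLf hlip x (((1 - l) / Lf) • v)
    have H4 := descent f f' hdiff Lf hLf hlip x ((-(l / Lf)) • v)
    -- expand inner products and norms
    have e1 : ∀ (y : EuclideanSpace ℝ (Fin q)) (c : ℝ),
        ⟪y, x + c • v⟫ = ⟪y, x⟫ + c * ⟪y, v⟫ := by
      intro y c; rw [inner_add_right, real_inner_smul_right]
    have e2 : ∀ c : ℝ, ‖c • v‖ ^ 2 = c ^ 2 * ‖v‖ ^ 2 := by
      intro c; rw [norm_smul, Real.norm_eq_abs, mul_pow, sq_abs]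
    have e3 : ∀ c : ℝ, ⟪f' x, c • v⟫ = c * ⟪f' x, v⟫ := fun c =>
      real_inner_smul_right _ _ _
    rw [e1] at H1 H2
    rw [e2, e3] at H3 H4
    have e4 : ⟪y₁, v⟫ = ⟪y₂, v⟫ + ‖v‖ ^ 2 := by
      have : ⟪y₁ - y₂, v⟫ = ‖v‖ ^ 2 := by
        rw [hv, real_inner_self_eq_norm_sq]
      rw [inner_sub_left] at this; linarith
    rw [e4] at H1
    have e5 : ⟪l • y₁ + (1 - l) • y₂, x⟫ = l * ⟪y₁, x⟫ + (1 - l) * ⟪y₂, x⟫ := by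
      rw [inner_add_left, real_inner_smul_left, real_inner_smul_left]
    rw [e5, ← hv]
    set A := ⟪y₁, x⟫
    set B := ⟪y₂, x⟫
    set Q := ⟪y₂, v⟫
    set G := ⟪f' x, v⟫
    set N := ‖v‖ ^ 2 with hN
    set F0 := f x
    set F1 := f (x + ((1 - l) / Lf) • v)
    set F2 := f (x + (-(l / Lf)) • v)
    have G1 := mul_le_mul_of_nonneg_left H1 hl0
    have G2 := mul_le_mul_of_nonneg_left H2 hl1'
    have G3 := mul_le_mul_of_nonneg_left H3 hl0
    have G4 := mul_le_mul_of_nonneg_left H4 hl1'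
    have comb : l * A + (1 - l) * B - F0
        + (l * ((1 - l) / Lf * (Q + N)) - (1 - l) * (l / Lf * Q))
        + (l * ((1 - l) / Lf * G) + (1 - l) * (-(l / Lf) * G)) * (-1)
        - (l * (Lf / 2 * (((1 - l) / Lf) ^ 2 * N))
            + (1 - l) * (Lf / 2 * ((-(l / Lf)) ^ 2 * N)))
        ≤ l * realConj f y₁ + (1 - l) * realConj f y₂ := by
      linarith [G1, G2, G3, G4]
    have id1 : (l * ((1 - l) / Lf * (Q + N)) - (1 - l) * (l / Lf * Q))
        + (l * ((1 - l) / Lf * G) + (1 - l) * (-(l / Lf) * G)) * (-1)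
        - (l * (Lf / 2 * (((1 - l) / Lf) ^ 2 * N))
            + (1 - l) * (Lf / 2 * ((-(l / Lf)) ^ 2 * N)))
        = 1 / (2 * Lf) * (l * (1 - l) * N) := by
      field_simp
      ring
    linarith [comb, id1]
  rw [realConj]
  exact ciSup_le key

lemma rayleigh_min {p : ℕ} (A : Matrix (Fin p) (Fin p) ℝ) (hA : A.IsHermitian)
    (x : EuclideanSpace ℝ (Fin p)) :
    (⨅ i, hA.eigenvalues i) * ‖x‖ ^ 2 ≤ ⟪x, Matrix.toEuclideanLin A x⟫ := by
  classical
  set b := hA.eigenvectorBasis with hb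
  set T := Matrix.toEuclideanLin A with hT
  have hsym : (Matrix.toEuclideanLin A).IsSymmetric :=
    Matrix.isHermitian_iff_isSymmetric.mp hA
  have hTb : ∀ i, T (b i) = hA.eigenvalues i • b i := by
    intro i
    apply (WithLp.equiv 2 (Fin p → ℝ)).injective
    have h1 := Matrix.ofLp_toEuclideanLin_apply A (b i)
    have h2 := hA.mulVec_eigenvectorBasis i
    rw [hT, WithLp.equiv_apply, WithLp.equiv_apply, h1]
    ext j
    have := congrFun h2 j
    simpa using this
  have hrepr : ∀ i, b.repr (T x) i = hA.eigenvalues i * b.repr x i := by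
    intro i
    rw [b.repr_apply_apply, b.repr_apply_apply, ← hsym (b i) x, hTb i,
      real_inner_smul_left]
  have hinner : ⟪x, T x⟫ = ∑ i, hA.eigenvalues i * (b.repr x i) ^ 2 := by
    have h1 : ⟪x, T x⟫ = ⟪b.repr x, b.repr (T x)⟫ := (b.repr.inner_map_map x (T x)).symm
    rw [h1]
    rw [PiLp.inner_apply]
    apply Finset.sum_congr rfl
    intro i _
    rw [hrepr i]
    simp [RCLike.inner_apply]
    ring
  have hnorm : ‖x‖ ^ 2 = ∑ i, (b.repr x i) ^ 2 := by
    have h1 : ‖x‖ = ‖b.repr x‖ := (b.repr.norm_map x).symm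
    rw [h1, EuclideanSpace.norm_eq, Real.sq_sqrt (by positivity)]
    apply Finset.sum_congr rfl
    intro i _
    rw [Real.norm_eq_abs, sq_abs]
  rw [hinner, hnorm, Finset.mul_sum]
  apply Finset.sum_le_sum
  intro i _
  have h1 : (⨅ j, hA.eigenvalues j) ≤ hA.eigenvalues i :=
    ciInf_le (Set.Finite.bddBelow (Set.finite_range _)) i
  nlinarith [sq_nonneg (b.repr x i)]

lemma mulVec_sq_lower {p n : ℕ} (H : Matrix (Fin p) (Fin n) ℝ)
    (v : EuclideanSpace ℝ (Fin p)) (w : EuclideanSpace ℝ (Fin n))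
    (hw : ∀ j, w j = (Hᵀ *ᵥ v) j) :
    eigMinMulT H * ‖v‖ ^ 2 ≤ ‖w‖ ^ 2 := by
  classical
  set hA : (H * Hᵀ).IsHermitian :=
    (H.conjTranspose_eq_transpose_of_trivial ▸ isHermitian_mul_conjTranspose_self H)
  have h1 := rayleigh_min (H * Hᵀ) hA v
  have h2 : ⟪v, Matrix.toEuclideanLin (H * Hᵀ) v⟫ = ⟪w, w⟫ := by
    rw [PiLp.inner_apply, PiLp.inner_apply]
    simp only [RCLike.inner_apply, conj_trivial]
    have e1 : ∀ i, (Matrix.toEuclideanLin (H * Hᵀ) v) i = ((H * Hᵀ) *ᵥ v) i := fun i => rfl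
    simp only [e1, hw]
    have ha : ∑ i, ((H * Hᵀ) *ᵥ v) i * v i = ((H * Hᵀ) *ᵥ v) ⬝ᵥ v := rfl
    have hb : ∑ j, (Hᵀ *ᵥ v) j * (Hᵀ *ᵥ v) j = (Hᵀ *ᵥ v) ⬝ᵥ (Hᵀ *ᵥ v) := rfl
    rw [ha, hb, dotProduct_comm, ← Matrix.mulVec_mulVec, Matrix.dotProduct_mulVec, ← Matrix.mulVec_transpose]
  rw [h2] at h1
  rw [real_inner_self_eq_norm_sq] at h1
  exact h1

end Aux

/-- For `f : ℝ^n → ℝ` convex, differentiable with `L_f`-Lipschitz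
gradient and strongly convex with parameter `σ_f > 0`, and `H_y` a real `p×n` matrix
with `λ_min(H_y H_yᵀ) > 0`, the function `F(μ) = f⋆(H_yᵀ μ)` is strongly convex
with parameter `λ_min(H_y H_yᵀ)/L_f`. -/
theorem dual_function_strongly_convex
    {n p : ℕ} (f : EuclideanSpace ℝ (Fin n) → ℝ)
    (hconv : ConvexOn ℝ Set.univ f)
    (Lf : ℝ) (hLf : 0 < Lf)
    (f' : EuclideanSpace ℝ (Fin n) → EuclideanSpace ℝ (Fin n))
    (hdiff : ∀ x, HasGradientAt f (f' x) x)
    (hlip : ∀ x y, ‖f' x - f' y‖ ≤ Lf * ‖x - y‖)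
    (σf : ℝ) (hσ : 0 < σf) (hf_sc : StronglyConvexWith σf f)
    (Hy : Matrix (Fin p) (Fin n) ℝ) (hmin : 0 < eigMinMulT Hy)
    (F : EuclideanSpace ℝ (Fin p) → ℝ)
    (hF : ∀ μ, F μ = realConj f (WithLp.toLp 2 (Hyᵀ.mulVec μ))) :
    StronglyConvexWith (eigMinMulT Hy / Lf) F := by
  intro μ₁ μ₂ l hl0 hl1
  rw [hF, hF, hF]
  set A₁ : EuclideanSpace ℝ (Fin n) := WithLp.toLp 2 (Hyᵀ.mulVec μ₁) with hA₁
  set A₂ : EuclideanSpace ℝ (Fin n) := WithLp.toLp 2 (Hyᵀ.mulVec μ₂) with hA₂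
  have hlin : (WithLp.toLp 2 (Hyᵀ.mulVec (l • μ₁ + (1 - l) • μ₂ : EuclideanSpace ℝ (Fin p))) : EuclideanSpace ℝ (Fin n))
      = l • A₁ + (1 - l) • A₂ := by
    ext j
    simp only [hA₁, hA₂, PiLp.add_apply, PiLp.smul_apply, smul_eq_mul,
      PiLp.toLp_apply, WithLp.ofLp_add, WithLp.ofLp_smul, Pi.add_apply, Pi.smul_apply,
      Matrix.mulVec, dotProduct]
    rw [Finset.mul_sum, Finset.mul_sum, ← Finset.sum_add_distrib]
    apply Finset.sum_congr rfl
    intro k _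
    ring
  rw [hlin]
  have hmain := conj_strongly_convex f f' hdiff Lf hLf hlip σf hσ hf_sc A₁ A₂ l hl0 hl1
  have hvec : eigMinMulT Hy * ‖μ₁ - μ₂‖ ^ 2 ≤ ‖A₁ - A₂‖ ^ 2 := by
    apply mulVec_sq_lower Hy (μ₁ - μ₂) (A₁ - A₂)
    intro j
    simp only [hA₁, hA₂, PiLp.sub_apply, PiLp.toLp_apply, WithLp.ofLp_sub, Pi.sub_apply, Matrix.mulVec, dotProduct]
    rw [← Finset.sum_sub_distrib]
    apply Finset.sum_congr rfl
    intro k _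
    ring
  have hcoef : (0:ℝ) ≤ 1 / (2 * Lf) * (l * (1 - l)) := by
    apply mul_nonneg
    · positivity
    · exact mul_nonneg hl0 (by linarith)
  have hstep : eigMinMulT Hy / Lf / 2 * (l * (1 - l) * ‖μ₁ - μ₂‖ ^ 2)
      ≤ 1 / (2 * Lf) * (l * (1 - l) * ‖A₁ - A₂‖ ^ 2) := by
    have h1 : eigMinMulT Hy / Lf / 2 * (l * (1 - l) * ‖μ₁ - μ₂‖ ^ 2)
        = 1 / (2 * Lf) * (l * (1 - l)) * (eigMinMulT Hy * ‖μ₁ - μ₂‖ ^ 2) := by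
      field_simp
    have h2 : 1 / (2 * Lf) * (l * (1 - l) * ‖A₁ - A₂‖ ^ 2)
        = 1 / (2 * Lf) * (l * (1 - l)) * ‖A₁ - A₂‖ ^ 2 := by ring
    rw [h1, h2]
    exact mul_le_mul_of_nonneg_left hvec hcoef
  linarith [hmain, hstep]
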